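/- In a tree T, the Boolean ring of cuts ℬT equals ℬ₁T, i.e., every subset A of VT with finite coboundary δA is generated by cuts whose coboundary is a single edge; moreover A is uniquely determined by the finite edge set δA together with the information, for one fixed vertex p, of whether p ∈ A or p ∈ A*. -/

import Mathlib

open Set

variable {V : Type*}

def cobound (G : SimpleGraph V) (A : Set V) : Set (Sym2 V) :=
  {e | e ∈ G.edgeSet ∧ ∃ u v, e = s(u, v) ∧ u ∈ A ∧ v ∉ A}

def IsCut (G : SimpleGraph V) (A : Set V) : Prop := (cobound G A).Finite

namespace TreeCuts

open SimpleGraph Walk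

variable {T : SimpleGraph V}

/-- The canonical path from `p` to `v` in a connected graph. -/
noncomputable def pthP (hT : T.IsTree) (p v : V) : T.Path p v :=
  letI := Classical.decEq V
  ((hT.isConnected.preconnected p v).some).toPath

noncomputable def pth (hT : T.IsTree) (p v : V) : T.Walk p v :=
  (pthP hT p v).1

lemma pth_isPath (hT : T.IsTree) (p v : V) : (pth hT p v).IsPath :=
  (pthP hT p v).2

lemma pth_eq (hT : T.IsTree) {p v : V} (w : T.Walk p v) (hw : w.IsPath) :
    pth hT p v = w :=
  congrArg Subtype.val (hT.IsAcyclic.path_unique ⟨pth hT p v, pth_isPath hT p v⟩ ⟨w, hw⟩)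

/-- Key lemma: for adjacent `u`, `w`, the edge sets of the canonical paths to `u` and
to `w` differ exactly in the edge `s(u, w)`. -/
lemma key (hT : T.IsTree) (p : V) {u w : V} (h : T.Adj u w) (f : Sym2 V) :
    ((f ∈ (pth hT p u).edges) ↔ (f ∉ (pth hT p w).edges)) ↔ f = s(u, w) := by
  classical
  set q := pth hT p w with hqdef
  have hq : q.IsPath := pth_isPath hT p w
  by_cases hu : u ∈ q.support
  · have ht : (q.takeUntil u hu).IsPath := hq.takeUntil hu
    have hd : (q.dropUntil u hu).IsPath := hq.dropUntil hu
    have hsingle : (Walk.cons h (Walk.nil : T.Walk w w)).IsPath := by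
      simp [Walk.cons_isPath_iff, h.ne]
    have hdeq : q.dropUntil u hu = Walk.cons h Walk.nil :=
      congrArg Subtype.val (hT.IsAcyclic.path_unique ⟨_, hd⟩ ⟨_, hsingle⟩)
    have hPu : pth hT p u = q.takeUntil u hu := pth_eq hT _ ht
    have hqe : q.edges = (q.takeUntil u hu).edges ++ [s(u, w)] := by
      conv_lhs => rw [← q.take_spec hu]
      rw [Walk.edges_append, hdeq]
      simp
    have hnotin : s(u, w) ∉ (q.takeUntil u hu).edges := by
      have hnd := hq.edges_nodup
      rw [hqe] at hnd
      rw [List.nodup_append] at hnd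
      intro hc
      exact hnd.2.2 _ hc _ (by simp) rfl
    rw [hPu]
    by_cases hf : f = s(u, w)
    · subst hf
      simp [hqe, hnotin]
    · rw [hqe]
      simp only [List.mem_append, List.mem_singleton, hf, or_false]
      tauto
  · have hcp : (q.concat h.symm).IsPath := by
      rw [← Walk.isPath_reverse_iff, Walk.reverse_concat, Walk.cons_isPath_iff]
      refine ⟨(Walk.isPath_reverse_iff q).2 hq, ?_⟩
      simpa using hu
    have hPu : pth hT p u = q.concat h.symm := pth_eq hT _ hcp
    have hqe : (q.concat h.symm).edges = q.edges ++ [s(w, u)] := by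
      rw [Walk.edges_concat, List.concat_eq_append]
    have hnotin : s(u, w) ∉ q.edges := fun hc => hu (q.fst_mem_support_of_mem_edges hc)
    rw [hPu, hqe]
    by_cases hf : f = s(u, w)
    · subst hf
      have : s(u, w) = s(w, u) := Sym2.eq_swap
      simp [hnotin, ← this]
    · have hf' : f ≠ s(w, u) := by
        rw [← Sym2.eq_swap]; exact hf
      simp only [List.mem_append, List.mem_singleton, hf', or_false, hf, iff_false]
      tauto

lemma mem_cobound_iff {A : Set V} {u w : V} (h : T.Adj u w) :
    s(u, w) ∈ cobound T A ↔ ¬(u ∈ A ↔ w ∈ A) := by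
  constructor
  · rintro ⟨-, a, b, hab, ha, hb⟩
    rw [Sym2.eq_iff] at hab
    rcases hab with ⟨rfl, rfl⟩ | ⟨rfl, rfl⟩ <;> tauto
  · intro hne
    by_cases hu : u ∈ A
    · exact ⟨T.mem_edgeSet.mpr h, u, w, rfl, hu, fun hw => hne ⟨fun _ => hw, fun _ => hu⟩⟩
    · have hw : w ∈ A := by tauto
      exact ⟨T.mem_edgeSet.mpr h, w, u, Sym2.eq_swap.symm, hw, hu⟩

/-- The coboundary edges of `A` lying on the canonical path from `p` to `v`. -/
def Scut (hT : T.IsTree) (p : V) (A : Set V) (v : V) : Set (Sym2 V) :=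
  {f | f ∈ cobound T A ∧ f ∈ (pth hT p v).edges}

lemma Scut_finite (hT : T.IsTree) (p : V) {A : Set V} (hA : IsCut T A) (v : V) :
    (Scut hT p A v).Finite :=
  hA.subset fun _ hf => hf.1

lemma scut_step (hT : T.IsTree) (p : V) {A : Set V} (hA : IsCut T A) {u v : V}
    (h : T.Adj u v) :
    Odd (Scut hT p A v).ncard ↔ (Odd (Scut hT p A u).ncard ↔ s(u, v) ∉ cobound T A) := by
  classical
  have hkey := fun f => key hT p h f
  by_cases he : s(u, v) ∈ cobound T A
  · have hex : s(u, v) ∈ (pth hT p u).edges ↔ s(u, v) ∉ (pth hT p v).edges :=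
      (hkey s(u, v)).2 rfl
    by_cases hin : s(u, v) ∈ (pth hT p u).edges
    · have h1 : Scut hT p A u = insert s(u, v) (Scut hT p A v) := by
        ext f
        by_cases hf : f = s(u, v)
        · subst hf
          simp [Scut, he, hin]
        · have hkf : ¬((f ∈ (pth hT p u).edges) ↔ (f ∉ (pth hT p v).edges)) := by
            intro hc; exact hf ((hkey f).1 hc)
          simp only [Scut, Set.mem_setOf_eq, Set.mem_insert_iff, hf, false_or]
          tauto
      have h2 : s(u, v) ∉ Scut hT p A v := fun hc => (hex.1 hin) hc.2
      rw [h1, Set.ncard_insert_of_notMem h2 (Scut_finite hT p hA v)]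
      rw [Nat.odd_add_one]
      simp only [he, not_true_eq_false, iff_false]
      tauto
    · have hvin : s(u, v) ∈ (pth hT p v).edges := by
        by_contra hc
        exact hin (hex.2 hc)
      have h1 : Scut hT p A v = insert s(u, v) (Scut hT p A u) := by
        ext f
        by_cases hf : f = s(u, v)
        · subst hf
          simp [Scut, he, hvin]
        · have hkf : ¬((f ∈ (pth hT p u).edges) ↔ (f ∉ (pth hT p v).edges)) := by
            intro hc; exact hf ((hkey f).1 hc)
          simp only [Scut, Set.mem_setOf_eq, Set.mem_insert_iff, hf, false_or]
          tauto
      have h2 : s(u, v) ∉ Scut hT p A u := fun hc => hin hc.2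
      rw [h1, Set.ncard_insert_of_notMem h2 (Scut_finite hT p hA u)]
      rw [Nat.odd_add_one]
      simp only [he, not_true_eq_false, iff_false]
  · have h1 : Scut hT p A v = Scut hT p A u := by
      ext f
      simp only [Scut, Set.mem_setOf_eq]
      constructor
      · rintro ⟨hfa, hfe⟩
        have hf : f ≠ s(u, v) := fun hc => he (hc ▸ hfa)
        have hkf : ¬((f ∈ (pth hT p u).edges) ↔ (f ∉ (pth hT p v).edges)) := by
          intro hc; exact hf ((hkey f).1 hc)
        exact ⟨hfa, by tauto⟩
      · rintro ⟨hfa, hfe⟩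
        have hf : f ≠ s(u, v) := fun hc => he (hc ▸ hfa)
        have hkf : ¬((f ∈ (pth hT p u).edges) ↔ (f ∉ (pth hT p v).edges)) := by
          intro hc; exact hf ((hkey f).1 hc)
        exact ⟨hfa, by tauto⟩
    rw [h1]
    simp [he]

lemma parity_aux (hT : T.IsTree) {A : Set V} (hA : IsCut T A) :
    ∀ {v p : V} (_ : T.Walk v p), v ∈ A ↔ (p ∈ A ↔ ¬ Odd (Scut hT p A v).ncard) := by
  intro v p q
  induction q with
  | nil =>
    rename_i u
    have hnil : pth hT u u = Walk.nil := pth_eq hT _ (by simp)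
    have hempty : Scut hT u A u = ∅ := by
      simp [Scut, hnil]
    rw [hempty]
    simp
  | cons h q ih =>
    rename_i a b c
    have hstep := scut_step hT c hA h
    have hmem := mem_cobound_iff (A := A) h
    tauto

lemma parity (hT : T.IsTree) (p : V) {A : Set V} (hA : IsCut T A) (v : V) :
    v ∈ A ↔ (p ∈ A ↔ ¬ Odd (Scut hT p A v).ncard) := by
  obtain ⟨q⟩ : T.Reachable v p := hT.isConnected.preconnected v p
  exact parity_aux hT hA q

/-- One side of the fundamental cut of an edge: vertices whose canonical path from `p`
uses the edge `f`. -/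
def Dset (hT : T.IsTree) (p : V) (f : Sym2 V) : Set V := {x | f ∈ (pth hT p x).edges}

lemma mem_cobound_Dset (hT : T.IsTree) (p : V) {f : Sym2 V} (hf : f ∈ T.edgeSet) :
    f ∈ cobound T (Dset hT p f) := by
  revert hf
  induction f using Sym2.ind with
  | _ a b =>
    intro hf
    have hadj : T.Adj a b := T.mem_edgeSet.mp hf
    have hkey := (key hT p hadj s(a, b)).2 rfl
    refine ⟨hf, ?_⟩
    by_cases hin : s(a, b) ∈ (pth hT p a).edges
    · exact ⟨a, b, rfl, hin, hkey.1 hin⟩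
    · have hb : s(a, b) ∈ (pth hT p b).edges := by
        by_contra hnb
        exact hin (hkey.2 hnb)
      exact ⟨b, a, Sym2.eq_swap.symm, hb, hin⟩

lemma cobound_Dset (hT : T.IsTree) (p : V) {f : Sym2 V} (hf : f ∈ T.edgeSet) :
    cobound T (Dset hT p f) = {f} := by
  ext g
  simp only [Set.mem_singleton_iff]
  constructor
  · rintro ⟨hg, a, b, rfl, ha, hb⟩
    have hadj : T.Adj a b := T.mem_edgeSet.mp hg
    exact ((key hT p hadj f).1 (iff_of_true ha hb)).symm
  · intro hgf
    subst hgf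
    exact mem_cobound_Dset hT p hf

lemma cobound_univ : cobound T (Set.univ : Set V) = ∅ := by
  ext g
  simp [cobound]

end TreeCuts

/-- in a tree `T`, every cut `A` (finite coboundary) lies in the Boolean ring
generated by the cuts with at most one coboundary edge: `A` is the "odd-parity" set
(i.e. iterated symmetric difference) of a finite family of such cuts; moreover `A` is
uniquely determined by `δA` together with whether a fixed vertex `p` lies in `A`. -/
theorem tree_cuts_generated_by_edge_cuts (T : SimpleGraph V) (hT : T.IsTree)
    (A : Set V) (hA : IsCut T A) (p : V) :
    (∃ s : Finset (Set V),
      (∀ B ∈ s, (cobound T B).ncard ≤ 1) ∧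
      A = {v : V | Odd {B | B ∈ (s : Set (Set V)) ∧ v ∈ B}.ncard}) ∧
    (∀ B : Set V, IsCut T B → cobound T B = cobound T A → (p ∈ B ↔ p ∈ A) → B = A) := by
  classical
  constructor
  · set D := fun f => TreeCuts.Dset hT p f with hD
    have hsub : cobound T A ⊆ T.edgeSet := fun f hf => hf.1
    have hinj : Set.InjOn D ↑hA.toFinset := by
      intro f hf g hg hfg
      have h1 := TreeCuts.cobound_Dset hT p (hsub (hA.mem_toFinset.mp hf))
      have h2 := TreeCuts.cobound_Dset hT p (hsub (hA.mem_toFinset.mp hg))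
      have h3 : cobound T (TreeCuts.Dset hT p f) = cobound T (TreeCuts.Dset hT p g) :=
        congrArg (cobound T) hfg
      rw [h1, h2] at h3
      exact Set.singleton_eq_singleton_iff.mp h3
    set s₀ : Finset (Set V) := hA.toFinset.image D with hs₀
    set s : Finset (Set V) := if p ∈ A then insert Set.univ s₀ else s₀ with hs
    have huniv : Set.univ ∉ s₀ := by
      intro hmem
      obtain ⟨f, hf, hfu⟩ := Finset.mem_image.mp hmem
      have h1 := TreeCuts.cobound_Dset hT p (hsub (hA.mem_toFinset.mp hf))
      have hfu' : TreeCuts.Dset hT p f = univ := hfu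
      rw [hfu', TreeCuts.cobound_univ] at h1
      exact (Set.singleton_ne_empty f) h1.symm
    refine ⟨s, ?_, ?_⟩
    · intro B hB
      have hBs : B = Set.univ ∨ B ∈ s₀ := by
        by_cases hp : p ∈ A <;> simp only [hs, hp, if_true, if_false,
          Finset.mem_insert] at hB <;> tauto
      rcases hBs with rfl | hB0
      · rw [TreeCuts.cobound_univ]
        simp
      · obtain ⟨f, hf, rfl⟩ := Finset.mem_image.mp hB0
        rw [TreeCuts.cobound_Dset hT p (hsub (hA.mem_toFinset.mp hf))]
        simp
    · ext v
      have hpar := TreeCuts.parity hT p hA v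
      have hset : {B | B ∈ (s : Set (Set V)) ∧ v ∈ B} = ↑(s.filter (fun B => v ∈ B)) := by
        ext B
        simp [Finset.mem_filter]
      have hncard : {B | B ∈ (s : Set (Set V)) ∧ v ∈ B}.ncard
          = (s.filter (fun B => v ∈ B)).card := by
        rw [hset, Set.ncard_coe_finset]
      have hcard0 : (s₀.filter (fun B => v ∈ B)).card
          = (hA.toFinset.filter (fun f => v ∈ D f)).card := by
        rw [hs₀, Finset.filter_image]
        exact Finset.card_image_of_injOn (hinj.mono (by
          intro x hx
          exact Finset.mem_coe.mpr (Finset.filter_subset _ _ (Finset.mem_coe.mp hx))))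
      have hScut : (TreeCuts.Scut hT p A v).ncard
          = (hA.toFinset.filter (fun f => v ∈ D f)).card := by
        rw [← Set.ncard_coe_finset]
        congr 1
        ext f
        simp [TreeCuts.Scut, TreeCuts.Dset, hD, Finset.mem_filter, hA.mem_toFinset]
      by_cases hp : p ∈ A
      · have hseq : s = insert Set.univ s₀ := by rw [hs, if_pos hp]
        have hfil : s.filter (fun B => v ∈ B)
            = insert Set.univ (s₀.filter (fun B => v ∈ B)) := by
          rw [hseq, Finset.filter_insert, if_pos (Set.mem_univ v)]
        have hcards : (s.filter (fun B => v ∈ B)).card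
            = (hA.toFinset.filter (fun f => v ∈ D f)).card + 1 := by
          rw [hfil, Finset.card_insert_of_notMem
            (fun hc => huniv (Finset.filter_subset _ _ hc)), hcard0]
        simp only [Set.mem_setOf_eq, hncard, hcards, Nat.odd_add_one, ← hScut]
        rw [hpar]
        tauto
      · have hseq : s = s₀ := by rw [hs, if_neg hp]
        have hcards : (s.filter (fun B => v ∈ B)).card
            = (hA.toFinset.filter (fun f => v ∈ D f)).card := by
          rw [hseq, hcard0]
        simp only [Set.mem_setOf_eq, hncard, hcards, ← hScut]
        rw [hpar]
        tauto
  · intro B hB hcb hp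
    ext v
    have h1 := TreeCuts.parity hT p hB v
    have h2 := TreeCuts.parity hT p hA v
    have hsame : TreeCuts.Scut hT p B v = TreeCuts.Scut hT p A v := by
      unfold TreeCuts.Scut
      rw [hcb]
    rw [hsame] at h1
    tauto
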